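/- Let α ∈ ℝ with sin α ≠ 0 and sin(2α) ≠ 0, and let h ∈ ℝ, h ≠ 0, satisfy both 2h² − (1/√3)sin(2α)·h − (1/3)sin²(2α) = 0 and 2h² − (1/√3)·(sin²α / sin(2α))·h + (2/3)sin²α·cos(2α) = 0. Then exactly one of the following holds: (a) h = −1/2 and α = −π/3 + kπ for some integer k; (b) h = −1/4 and α = π/3 + kπ; (c) h = 1/4 and α = −π/3 + kπ; (d) h = 1/2 and α = π/3 + kπ. -/

import Mathlib

open Real

set_option maxHeartbeats 1600000 in
/-- Solutions of the reduced Codazzi–Gauss system for `θ₂ = π/3`, `θ₁ + θ₃ = 2π/3`: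
a nonzero `h` satisfying both equations forces exactly one of four explicit cases. -/
theorem reduced_system_solutions (α h : ℝ)
    (hα : sin α ≠ 0) (h2α : sin (2 * α) ≠ 0) (hh : h ≠ 0)
    (e1 : 2 * h ^ 2 - (1 / Real.sqrt 3) * sin (2 * α) * h - (1 / 3) * sin (2 * α) ^ 2 = 0)
    (e2 : 2 * h ^ 2 - (1 / Real.sqrt 3) * (sin α ^ 2 / sin (2 * α)) * h
      + (2 / 3) * sin α ^ 2 * cos (2 * α) = 0) :
    (h = -(1 / 2) ∧ ∃ k : ℤ, α = -(π / 3) + k * π) ∨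
    (h = -(1 / 4) ∧ ∃ k : ℤ, α = π / 3 + k * π) ∨
    (h = 1 / 4 ∧ ∃ k : ℤ, α = -(π / 3) + k * π) ∨
    (h = 1 / 2 ∧ ∃ k : ℤ, α = π / 3 + k * π) := by
  have hr2 : Real.sqrt 3 ^ 2 = 3 := Real.sq_sqrt (by norm_num)
  have hrpos : (0:ℝ) < Real.sqrt 3 := Real.sqrt_pos.mpr (by norm_num)
  have hr0 : Real.sqrt 3 ≠ 0 := ne_of_gt hrpos
  set r := Real.sqrt 3 with hrdef
  set t := sin α with htdef
  set c := cos α with hcdef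
  have hs : sin (2 * α) = 2 * t * c := sin_two_mul α
  have hc2 : cos (2 * α) = 2 * c ^ 2 - 1 := cos_two_mul α
  have hpyth : t ^ 2 + c ^ 2 = 1 := sin_sq_add_cos_sq α
  have hc0 : c ≠ 0 := by
    intro h0
    apply h2α
    rw [hs, h0]; ring
  rw [hs] at e1 e2 h2α
  rw [hc2] at e2
  have hs0 : 2 * t * c ≠ 0 := h2α
  -- clear denominators
  have E1 : 6 * r * h ^ 2 - 3 * (2 * t * c) * h - r * (2 * t * c) ^ 2 = 0 := by
    field_simp at e1
    nlinarith [e1, hr2, sq_nonneg r]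
  have E2 : 6 * r * h ^ 2 * (2 * t * c) - 3 * t ^ 2 * h
      + 2 * r * t ^ 2 * (2 * c ^ 2 - 1) * (2 * t * c) = 0 := by
    field_simp at e2
    linear_combination t * e2
  clear_value t c r
  -- key factorization
  have key : (4 * c ^ 2 - 1) * (3 * h + 4 * r * t * c) = 0 := by
    have ht2 : t ^ 2 ≠ 0 := pow_ne_zero 2 hα
    have hk : t ^ 2 * ((4 * c ^ 2 - 1) * (3 * h + 4 * r * t * c)) = 0 := by
      linear_combination E2 - (2 * t * c) * E1
    exact (mul_eq_zero.mp hk).resolve_left ht2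
  rcases mul_eq_zero.mp key with hc4 | hbad
  · -- c² = 1/4
    have hcc : c ^ 2 = 1 / 4 := by linarith
    have htt : t ^ 2 = 3 / 4 := by linarith
    have hfac : (t - r * c) * (t + r * c) = 0 := by
      linear_combination htt - c ^ 2 * hr2 - 3 * hcc
    rcases mul_eq_zero.mp hfac with hpos | hneg
    · -- t = r c, so α = π/3 + kπ
      have htc : t = r * c := by linarith
      have htc' : t * c = r / 4 := by
        calc t * c = r * c ^ 2 := by rw [htc]; ring
        _ = r / 4 := by rw [hcc]; ring
      have hang : ∃ k : ℤ, α = π / 3 + k * π := by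
        have hz : sin (α - π / 3) = 0 := by
          rw [Real.sin_sub, Real.cos_pi_div_three, Real.sin_pi_div_three,
            ← htdef, ← hcdef, ← hrdef, htc]
          ring
        obtain ⟨n, hn⟩ := Real.sin_eq_zero_iff.mp hz
        exact ⟨n, by linarith⟩
      have hQ : r * (12 * h ^ 2 - 3 * h - 3 / 2) = 0 := by
        linear_combination 2 * E1 + (12 * h + 8 * r * (t * c) + 2 * r ^ 2) * htc'
          + (r / 2) * hr2
      have hq : (h - 1 / 2) * (h + 1 / 4) = 0 := by
        have := (mul_eq_zero.mp hQ).resolve_left hr0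
        linear_combination (1 / 12 : ℝ) * this
      rcases mul_eq_zero.mp hq with h1 | h2
      · exact Or.inr (Or.inr (Or.inr ⟨by linarith, hang⟩))
      · exact Or.inr (Or.inl ⟨by linarith, hang⟩)
    · -- t = -r c, so α = -π/3 + kπ
      have htc : t = -(r * c) := by linarith
      have htc' : t * c = -(r / 4) := by
        calc t * c = -(r * c ^ 2) := by rw [htc]; ring
        _ = -(r / 4) := by rw [hcc]; ring
      have hang : ∃ k : ℤ, α = -(π / 3) + k * π := by
        have hz : sin (α + π / 3) = 0 := by
          rw [Real.sin_add, Real.cos_pi_div_three, Real.sin_pi_div_three,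
            ← htdef, ← hcdef, ← hrdef, htc]
          ring
        obtain ⟨n, hn⟩ := Real.sin_eq_zero_iff.mp hz
        exact ⟨n, by linarith⟩
      have hQ : r * (12 * h ^ 2 + 3 * h - 3 / 2) = 0 := by
        linear_combination 2 * E1 + (12 * h + 8 * r * (t * c) - 2 * r ^ 2) * htc'
          + (r / 2) * hr2
      have hq : (h + 1 / 2) * (h - 1 / 4) = 0 := by
        have := (mul_eq_zero.mp hQ).resolve_left hr0
        linear_combination (1 / 12 : ℝ) * this
      rcases mul_eq_zero.mp hq with h1 | h2
      · exact Or.inl ⟨by linarith, hang⟩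
      · exact Or.inr (Or.inr (Or.inl ⟨by linarith, hang⟩))
  · -- 3h = -4 r t c leads to contradiction
    exfalso
    have hz : 36 * r * (t * c) ^ 2 = 0 := by
      linear_combination E1 + (-2 * r * h + 10 * (t * c)) * hbad + (8 * (t * c) * h) * hr2
    have htc0 : t * c ≠ 0 := mul_ne_zero hα hc0
    have h36 : (36 : ℝ) * r ≠ 0 := by positivity
    have : (t * c) ^ 2 = 0 := by
      have := mul_eq_zero.mp (by linarith : (36 * r) * (t * c) ^ 2 = 0)
      exact this.resolve_left h36
    exact htc0 (pow_eq_zero_iff (by norm_num) |>.mp this)
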